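/- Let v_1,...,v_m ∈ ℤ² be primitive vectors such that the configuration contains the standard basis e_1, e_2, every vector has positive first coordinate or equals e_2, and the configuration is 2-regular (every linearly independent pair spans a sublattice of index 1 or 2). Then each v_j lies in the set {e_1, e_2, (1,1), (1,-1), (1,2), (1,-2), (2,1), (2,-1)}, and moreover the configuration contains at most one vector from {(1,2), (1,-2), (2,1), (2,-1)}. -/
import Mathlib

lemma detLI (a b : Fin 2 → ℤ) (hd : a 0 * b 1 - a 1 * b 0 ≠ 0) :
    LinearIndependent ℝ ![fun i => (a i : ℝ), fun i => (b i : ℝ)] := by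
  rw [LinearIndependent.pair_iff]
  intro s t hst
  have h0 := congrFun hst 0
  have h1 := congrFun hst 1
  simp only [Pi.add_apply, Pi.smul_apply, smul_eq_mul, Pi.zero_apply] at h0 h1
  have hd' : ((a 0 : ℝ) * b 1 - a 1 * b 0) ≠ 0 := by
    have := Int.cast_ne_zero (α := ℝ).mpr hd
    push_cast at this
    exact this
  constructor
  · have hs : s * ((a 0 : ℝ) * b 1 - a 1 * b 0) = 0 := by
      linear_combination (b 1 : ℝ) * h0 - (b 0 : ℝ) * h1
    exact (mul_eq_zero.mp hs).resolve_right hd'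
  · have ht : t * ((a 0 : ℝ) * b 1 - a 1 * b 0) = 0 := by
      linear_combination (a 0 : ℝ) * h1 - (a 1 : ℝ) * h0
    exact (mul_eq_zero.mp ht).resolve_right hd'

lemma two_smul_mem (a b w : Fin 2 → ℤ)
    (h : (Submodule.span ℤ ({a, b} : Set (Fin 2 → ℤ))).toAddSubgroup.index = 1 ∨
      (Submodule.span ℤ ({a, b} : Set (Fin 2 → ℤ))).toAddSubgroup.index = 2) :
    ∃ p q : ℤ, p * a 0 + q * b 0 = 2 * w 0 ∧ p * a 1 + q * b 1 = 2 * w 1 := by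
  have hmem : (2 : ℤ) • w ∈ Submodule.span ℤ ({a, b} : Set (Fin 2 → ℤ)) := by
    rcases h with h | h
    · have ht : (Submodule.span ℤ ({a, b} : Set (Fin 2 → ℤ))).toAddSubgroup = ⊤ :=
        AddSubgroup.index_eq_one.mp h
      refine Submodule.smul_mem _ _ ?_
      rw [← Submodule.mem_toAddSubgroup, ht]
      trivial
    · have h2 := (Submodule.span ℤ ({a, b} : Set (Fin 2 → ℤ))).toAddSubgroup.nsmul_index_mem w
      rw [h] at h2
      rw [Submodule.mem_toAddSubgroup] at h2
      have : (2 : ℤ) • w = (2 : ℕ) • w := by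
        rw [two_smul, two_smul]
      rwa [this]
  obtain ⟨p, q, hpq⟩ := Submodule.mem_span_pair.mp hmem
  refine ⟨p, q, ?_, ?_⟩
  · have := congrFun hpq 0; simpa using this
  · have := congrFun hpq 1; simpa using this

/-- A 2-regular configuration of primitive vectors in ℤ² containing the
standard basis, all of whose vectors have positive first coordinate or equal `e₂`,
is contained in `{e₁, e₂, (1,1), (1,-1), (1,2), (1,-2), (2,1), (2,-1)}` and contains at
most one vector from `{(1,2), (1,-2), (2,1), (2,-1)}`. -/
theorem stmt12 (m : ℕ) (v : Fin m → Fin 2 → ℤ)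
    (hprim : ∀ j, IsCoprime (v j 0) (v j 1))
    (he₁ : ∃ j, v j = ![1, 0]) (he₂ : ∃ j, v j = ![0, 1])
    (hpos : ∀ j, 0 < v j 0 ∨ v j = ![0, 1])
    (h2reg : ∀ j k : Fin m,
      LinearIndependent ℝ ![fun i => (v j i : ℝ), fun i => (v k i : ℝ)] →
      (Submodule.span ℤ ({v j, v k} : Set (Fin 2 → ℤ))).toAddSubgroup.index = 1 ∨
        (Submodule.span ℤ ({v j, v k} : Set (Fin 2 → ℤ))).toAddSubgroup.index = 2) :
    (∀ j, v j ∈ ({![1,0], ![0,1], ![1,1], ![1,-1], ![1,2], ![1,-2], ![2,1], ![2,-1]} :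
        Set (Fin 2 → ℤ))) ∧
    ∀ j k : Fin m,
      v j ∈ ({![1,2], ![1,-2], ![2,1], ![2,-1]} : Set (Fin 2 → ℤ)) →
      v k ∈ ({![1,2], ![1,-2], ![2,1], ![2,-1]} : Set (Fin 2 → ℤ)) →
      v j = v k := by
  obtain ⟨j1, hj1⟩ := he₁
  obtain ⟨j2, hj2⟩ := he₂
  constructor
  · intro j
    have hb1 : -2 ≤ v j 1 ∧ v j 1 ≤ 2 := by
      by_contra hc
      have hli : LinearIndependent ℝ ![fun i => (v j i : ℝ), fun i => (v j1 i : ℝ)] := by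
        apply detLI
        rw [hj1]; simp; omega
      obtain ⟨p, q, h1, h2⟩ := two_smul_mem (v j) (v j1) ![0, 1] (h2reg j j1 hli)
      rw [hj1] at h1 h2
      simp only [Matrix.cons_val_zero, Matrix.cons_val_one, Matrix.head_cons] at h1 h2
      have hdvd : v j 1 ∣ 2 := ⟨p, by linarith⟩
      have ha := Int.le_of_dvd (by norm_num) hdvd
      have hb := Int.le_of_dvd (by norm_num) ((neg_dvd).mpr hdvd)
      omega
    have hb0 : -2 ≤ v j 0 ∧ v j 0 ≤ 2 := by
      by_contra hc
      have hli : LinearIndependent ℝ ![fun i => (v j i : ℝ), fun i => (v j2 i : ℝ)] := by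
        apply detLI
        rw [hj2]; simp; omega
      obtain ⟨p, q, h1, h2⟩ := two_smul_mem (v j) (v j2) ![1, 0] (h2reg j j2 hli)
      rw [hj2] at h1 h2
      simp only [Matrix.cons_val_zero, Matrix.cons_val_one, Matrix.head_cons] at h1 h2
      have hdvd : v j 0 ∣ 2 := ⟨p, by linarith⟩
      have ha := Int.le_of_dvd (by norm_num) hdvd
      have hb := Int.le_of_dvd (by norm_num) ((neg_dvd).mpr hdvd)
      omega
    rcases hpos j with hp | hp
    · have hg : Int.gcd (v j 0) (v j 1) = 1 := Int.isCoprime_iff_gcd_eq_one.mp (hprim j)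
      have e1 : ¬(v j 0 = 2 ∧ v j 1 = 0) := fun ⟨ha, hb⟩ => by
        rw [ha, hb] at hg; norm_num [Int.gcd] at hg
      have e2 : ¬(v j 0 = 2 ∧ v j 1 = 2) := fun ⟨ha, hb⟩ => by
        rw [ha, hb] at hg; norm_num [Int.gcd] at hg
      have e3 : ¬(v j 0 = 2 ∧ v j 1 = -2) := fun ⟨ha, hb⟩ => by
        rw [ha, hb] at hg; norm_num [Int.gcd] at hg
      simp only [Set.mem_insert_iff, Set.mem_singleton_iff, funext_iff, Fin.forall_fin_two,
        Matrix.cons_val_zero, Matrix.cons_val_one, Matrix.head_cons]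
      omega
    · rw [hp]; simp
  · intro j k hj hk
    simp only [Set.mem_insert_iff, Set.mem_singleton_iff] at hj hk
    have key : ∀ (w : Fin 2 → ℤ),
        (∀ p q : ℤ, ¬(p * v j 0 + q * v k 0 = 2 * w 0 ∧ p * v j 1 + q * v k 1 = 2 * w 1)) →
        v j 0 * v k 1 - v j 1 * v k 0 ≠ 0 → False := by
      intro w hw hd
      obtain ⟨p, q, h1, h2⟩ := two_smul_mem (v j) (v k) w (h2reg j k (detLI _ _ hd))
      exact hw p q ⟨h1, h2⟩
    rcases hj with hj | hj | hj | hj <;> rcases hk with hk | hk | hk | hk <;>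
      first
        | exact hj.trans hk.symm
        | (refine False.elim (key ![1, 0] ?_ (by rw [hj, hk]; norm_num))
           rw [hj, hk]
           intro p q h
           simp only [Matrix.cons_val_zero, Matrix.cons_val_one, Matrix.head_cons] at h
           omega)
        | (refine False.elim (key ![0, 1] ?_ (by rw [hj, hk]; norm_num))
           rw [hj, hk]
           intro p q h
           simp only [Matrix.cons_val_zero, Matrix.cons_val_one, Matrix.head_cons] at h
           omega)
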